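/- Let λ > 0 and s ∈ (0,1). There exists a constant C = C(λ,s) such that for every nonzero integer k and all ζ, η ∈ ℝ, |e^{λ⟨k,η⟩^s} − e^{λ⟨k,η−ζ⟩^s}| ≤ C · ⟨k, η−ζ⟩^{s−1} · e^{λ(⟨k,η−ζ⟩^s + ⟨ζ⟩^s)}, where ⟨k,ξ⟩ := (1 + k² + ξ²)^{1/2} and ⟨ζ⟩ := (1 + ζ²)^{1/2}. -/

import Mathlib

set_option maxHeartbeats 1000000

open Real Nat

noncomputable def jap (k : ℤ) (ξ : ℝ) : ℝ := Real.sqrt (1 + (k : ℝ) ^ 2 + ξ ^ 2)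

noncomputable def japR (ζ : ℝ) : ℝ := Real.sqrt (1 + ζ ^ 2)

lemma rpow_sub_rpow_le (s : ℝ) (hs0 : 0 < s) (hs1 : s < 1) {y x : ℝ} (hy : 0 < y)
    (hyx : y ≤ x) : x ^ s - y ^ s ≤ 2 * y ^ (s - 1) * (x - y) := by
  rcases eq_or_lt_of_le hyx with rfl | hlt
  · simp
  have hcc := Real.concaveOn_rpow hs0.le hs1.le
  have hslope := hcc.slope_anti_adjacent (x := y / 2) (y := y) (z := x)
    (by simp; positivity) (by simp; linarith) (by linarith) hlt
  have h1 : (y ^ s - (y / 2) ^ s) / (y - y / 2) ≤ 2 * y ^ (s - 1) := by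
    have h2 : (y / 2) ^ s ≥ 0 := Real.rpow_nonneg (by positivity) _
    have h3 : y ^ (s - 1) = y ^ s / y := by
      rw [Real.rpow_sub hy, Real.rpow_one]
    rw [div_le_iff₀ (by linarith)]
    rw [h3]
    have : y ^ s / y * y = y ^ s := div_mul_cancel₀ _ (ne_of_gt hy)
    nlinarith [Real.rpow_nonneg hy.le s]
  have h4 : (x ^ s - y ^ s) / (x - y) ≤ 2 * y ^ (s - 1) := le_trans hslope h1
  calc x ^ s - y ^ s = (x ^ s - y ^ s) / (x - y) * (x - y) :=
        (div_mul_cancel₀ _ (sub_ne_zero.2 hlt.ne')).symm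
    _ ≤ 2 * y ^ (s - 1) * (x - y) := mul_le_mul_of_nonneg_right h4 (by linarith)

lemma rpow_gap (s : ℝ) (hs0 : 0 < s) (hs1 : s < 1) {y x : ℝ} (hy : 0 ≤ y) (hyx : y ≤ x) :
    (x + y) ^ s + y ^ s ≤ x ^ s + (2 * y) ^ s := by
  rcases eq_or_lt_of_le hy with rfl | hy
  · simp
  have hx : 0 < x := lt_of_lt_of_le hy hyx
  have hcc := Real.concaveOn_rpow hs0.le hs1.le
  set t : ℝ := y / x with ht
  have ht0 : 0 ≤ t := by positivity
  have ht1 : t ≤ 1 := by rw [ht, div_le_one hx]; exact hyx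
  have e1 : t * y + (1 - t) * (x + y) = x := by rw [ht]; field_simp; ring
  have e2 : (1 - t) * y + t * (x + y) = 2 * y := by rw [ht]; field_simp; ring
  have hab1 : t + (1 - t) = 1 := by ring
  have hab2 : (1 - t) + t = 1 := by ring
  have h1t : (0:ℝ) ≤ 1 - t := by linarith
  have h1 := hcc.2 (Set.mem_Ici.2 hy.le) (Set.mem_Ici.2 (by linarith : (0:ℝ) ≤ x + y))
    ht0 h1t hab1
  have h2 := hcc.2 (Set.mem_Ici.2 hy.le) (Set.mem_Ici.2 (by linarith : (0:ℝ) ≤ x + y))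
    h1t ht0 hab2
  simp only [smul_eq_mul] at h1 h2
  rw [e1] at h1
  rw [e2] at h2
  nlinarith [h1, h2]

lemma poly_le_exp (α s : ℝ) (hα : 0 < α) (hs0 : 0 < s) :
    ∃ C > (0:ℝ), ∀ t : ℝ, 0 ≤ t → t ≤ C * Real.exp (α * t ^ s) := by
  set n : ℕ := ⌈1 / s⌉₊ with hn
  have hns : 1 ≤ s * n := by
    have h1 : 1 / s ≤ (n : ℝ) := Nat.le_ceil _
    calc (1:ℝ) = s * (1 / s) := by field_simp
      _ ≤ s * n := by nlinarith
  refine ⟨max 1 ((n ! : ℝ) / α ^ n), lt_of_lt_of_le one_pos (le_max_left _ _), fun t ht => ?_⟩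
  have hexp1 : (1:ℝ) ≤ Real.exp (α * t ^ s) := by
    rw [Real.one_le_exp_iff]
    positivity
  rcases le_total t 1 with h | h
  · calc t ≤ 1 := h
      _ ≤ max 1 ((n ! : ℝ) / α ^ n) * 1 := by simp
      _ ≤ _ := by
          apply mul_le_mul_of_nonneg_left hexp1 (by positivity)
  · have key : (α * t ^ s) ^ n / (n ! : ℝ) ≤ Real.exp (α * t ^ s) := by
      have hx : (0:ℝ) ≤ α * t ^ s := by positivity
      have := Real.sum_le_exp_of_nonneg hx (n + 1)
      refine le_trans ?_ this
      have : ∀ i ∈ Finset.range (n+1), (0:ℝ) ≤ (α * t ^ s) ^ i / (i ! : ℝ) := by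
        intro i _; positivity
      exact Finset.single_le_sum this (Finset.self_mem_range_succ n)
    have ht1 : t ≤ (t ^ s) ^ n := by
      calc t = t ^ (1:ℝ) := (Real.rpow_one t).symm
        _ ≤ t ^ (s * n) := Real.rpow_le_rpow_of_exponent_le h hns
        _ = (t ^ s) ^ (n:ℝ) := Real.rpow_mul (by linarith) _ _
        _ = (t ^ s) ^ n := Real.rpow_natCast _ n
    have hts : (0:ℝ) ≤ t ^ s := Real.rpow_nonneg (by linarith) _
    calc t ≤ (t ^ s) ^ n := ht1
      _ = (α * t ^ s) ^ n / α ^ n := by rw [mul_pow]; field_simp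
      _ = ((n ! : ℝ) / α ^ n) * ((α * t ^ s) ^ n / (n ! : ℝ)) := by
          field_simp
      _ ≤ ((n ! : ℝ) / α ^ n) * Real.exp (α * t ^ s) := by
          apply mul_le_mul_of_nonneg_left key (by positivity)
      _ ≤ max 1 ((n ! : ℝ) / α ^ n) * Real.exp (α * t ^ s) := by
          apply mul_le_mul_of_nonneg_right (le_max_right _ _) (Real.exp_pos _).le

lemma exp_sub_exp_le (X Y : ℝ) :
    |Real.exp X - Real.exp Y| ≤ |X - Y| * Real.exp (max X Y) := by
  wlog h : Y ≤ X with H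
  · rw [abs_sub_comm, abs_sub_comm X Y, max_comm]
    exact H Y X (le_of_not_ge h)
  have h1 : Y - X + 1 ≤ Real.exp (Y - X) := Real.add_one_le_exp _
  rw [Real.exp_sub] at h1
  have h1' : (Y - X + 1) * Real.exp X ≤ Real.exp Y := by
    have := mul_le_mul_of_nonneg_right h1 (Real.exp_pos X).le
    rwa [div_mul_cancel₀ _ (Real.exp_pos X).ne'] at this
  have h2 : Real.exp X - Real.exp Y ≤ (X - Y) * Real.exp X := by nlinarith [h1']
  rw [max_eq_left h, abs_of_nonneg (by nlinarith [Real.exp_le_exp.2 h] : (0:ℝ) ≤ Real.exp X - Real.exp Y), abs_of_nonneg (by linarith : (0:ℝ) ≤ X - Y)]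
  exact h2

lemma jap_lip (k : ℤ) (x y : ℝ) : jap k x ≤ jap k y + |x - y| := by
  simp only [jap]
  set b := Real.sqrt (1 + (k:ℝ)^2 + y^2) with hb
  have hb0 : 0 ≤ b := Real.sqrt_nonneg _
  have hyb : |y| ≤ b := by
    rw [hb, ← Real.sqrt_sq_eq_abs]
    exact Real.sqrt_le_sqrt (by nlinarith [sq_nonneg (k:ℝ)])
  have key : 1 + (k:ℝ)^2 + x^2 ≤ (b + |x - y|)^2 := by
    have hb2 : b^2 = 1 + (k:ℝ)^2 + y^2 := Real.sq_sqrt (by positivity)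
    have h1 : y * (x - y) ≤ |y| * |x - y| := by
      calc y * (x - y) ≤ |y * (x - y)| := le_abs_self _
        _ = |y| * |x - y| := abs_mul _ _
    nlinarith [abs_nonneg (x - y), sq_abs (x - y), sq_abs y]
  calc Real.sqrt (1 + (k:ℝ)^2 + x^2) ≤ Real.sqrt ((b + |x - y|)^2) := Real.sqrt_le_sqrt key
    _ = b + |x - y| := Real.sqrt_sq (by positivity)

lemma one_le_jap (k : ℤ) (ξ : ℝ) : 1 ≤ jap k ξ := by
  rw [jap]
  calc (1:ℝ) = Real.sqrt 1 := Real.sqrt_one.symm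
    _ ≤ _ := Real.sqrt_le_sqrt (by nlinarith [sq_nonneg (k:ℝ), sq_nonneg ξ])

lemma one_le_japR (ζ : ℝ) : 1 ≤ japR ζ := by
  rw [japR]
  calc (1:ℝ) = Real.sqrt 1 := Real.sqrt_one.symm
    _ ≤ _ := Real.sqrt_le_sqrt (by nlinarith [sq_nonneg ζ])

lemma abs_le_japR (ζ : ℝ) : |ζ| ≤ japR ζ := by
  rw [japR]
  calc |ζ| = Real.sqrt (ζ^2) := (Real.sqrt_sq_eq_abs ζ).symm
    _ ≤ _ := Real.sqrt_le_sqrt (by nlinarith [sq_nonneg ζ])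

theorem exp_gevrey_difference_bound (lam s : ℝ) (hlam : 0 < lam) (hs : s ∈ Set.Ioo (0 : ℝ) 1) :
    ∃ C > (0 : ℝ), ∀ (k : ℤ), k ≠ 0 → ∀ (ζ η : ℝ),
      |Real.exp (lam * jap k η ^ s) - Real.exp (lam * jap k (η - ζ) ^ s)| ≤
        C * jap k (η - ζ) ^ (s - 1) *
          Real.exp (lam * (jap k (η - ζ) ^ s + japR ζ ^ s)) := by
  obtain ⟨hs0, hs1⟩ := hs
  have h2s : (2:ℝ)^s < 2 := by
    calc (2:ℝ)^s < 2^(1:ℝ) := Real.rpow_lt_rpow_of_exponent_lt one_lt_two hs1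
      _ = 2 := Real.rpow_one 2
  have h2spos : (0:ℝ) < 2^s := Real.rpow_pos_of_pos two_pos s
  set c : ℝ := 2 - 2^s with hcdef
  have hc : 0 < c := by rw [hcdef]; linarith
  obtain ⟨C₁, hC₁pos, hC₁⟩ := poly_le_exp (c*lam) s (by positivity) hs0
  obtain ⟨C₂, hC₂pos, hC₂⟩ := poly_le_exp (c*lam/2^s) s (by positivity) hs0
  refine ⟨4*lam*C₁ + C₂, by positivity, fun k _ ζ η => ?_⟩
  set a := jap k η with hadef
  set b := jap k (η - ζ) with hbdef
  set z := japR ζ with hzdef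
  have ha1 : 1 ≤ a := one_le_jap k η
  have hb1 : 1 ≤ b := one_le_jap k (η - ζ)
  have hz1 : 1 ≤ z := one_le_japR ζ
  have ha0 : (0:ℝ) < a := lt_of_lt_of_le one_pos ha1
  have hb0 : (0:ℝ) < b := lt_of_lt_of_le one_pos hb1
  set d := |a - b| with hddef
  have hd0 : 0 ≤ d := abs_nonneg _
  -- d ≤ z
  have l1 : a ≤ b + |ζ| := by
    have h := jap_lip k η (η - ζ)
    rw [show η - (η - ζ) = ζ by ring] at h
    exact h
  have l2 : b ≤ a + |ζ| := by
    have h := jap_lip k (η - ζ) η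
    rw [show η - ζ - η = -ζ by ring, abs_neg] at h
    exact h
  have hdz : d ≤ z := by
    have : d ≤ |ζ| := abs_sub_le_iff.2 ⟨by linarith, by linarith⟩
    exact this.trans (abs_le_japR ζ)
  set M := max a b with hMdef
  have hM0 : (0:ℝ) < M := lt_of_lt_of_le ha0 (le_max_left _ _)
  have hMbd : M ≤ b + d := by
    apply max_le
    · have : a - b ≤ d := le_abs_self _
      linarith
    · linarith
  -- gap bound on M^s
  have hgap : (b + d) ^ s ≤ b ^ s + d ^ s - c * (min b d) ^ s := by
    rcases le_total d b with h | h
    · have g := rpow_gap s hs0 hs1 hd0 h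
      rw [Real.mul_rpow (by norm_num : (0:ℝ) ≤ 2) hd0] at g
      rw [min_eq_right h, hcdef]
      nlinarith [g]
    · have g := rpow_gap s hs0 hs1 hb0.le h
      rw [Real.mul_rpow (by norm_num : (0:ℝ) ≤ 2) hb0.le, add_comm d b] at g
      rw [min_eq_left h, hcdef]
      nlinarith [g]
  have hds : d ^ s ≤ z ^ s := Real.rpow_le_rpow hd0 hdz hs0.le
  have hMs : M ^ s ≤ b ^ s + z ^ s - c * (min b d) ^ s := by
    have h1 : M ^ s ≤ (b + d) ^ s := Real.rpow_le_rpow hM0.le hMbd hs0.le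
    linarith
  set E := Real.exp (lam * (b ^ s + z ^ s)) with hEdef
  have hE : 0 < E := Real.exp_pos _
  have hexpM : Real.exp (lam * M ^ s) * Real.exp (c * lam * (min b d) ^ s) ≤ E := by
    rw [← Real.exp_add, hEdef]
    apply Real.exp_le_exp.2
    nlinarith [mul_le_mul_of_nonneg_left hMs hlam.le]
  have hbs1pos : (0:ℝ) < b ^ (s-1) := Real.rpow_pos_of_pos hb0 _
  -- exp bounds
  have hexpa : Real.exp (lam * a ^ s) ≤ Real.exp (lam * M ^ s) :=
    Real.exp_le_exp.2 (mul_le_mul_of_nonneg_left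
      (Real.rpow_le_rpow ha0.le (le_max_left a b) hs0.le) hlam.le)
  have hexpb : Real.exp (lam * b ^ s) ≤ Real.exp (lam * M ^ s) :=
    Real.exp_le_exp.2 (mul_le_mul_of_nonneg_left
      (Real.rpow_le_rpow hb0.le (le_max_right a b) hs0.le) hlam.le)
  rcases le_total (2 * d) b with hcase | hcase
  · -- case 1 : 2d ≤ b
    have hdb : d ≤ b := by linarith
    have hmin : min b d = d := min_eq_right hdb
    have hKmin : b / 2 ≤ min a b := by
      apply le_min
      · have : b - a ≤ d := by rw [hddef, abs_sub_comm]; exact le_abs_self _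
        linarith
      · linarith
    have hK0 : (0:ℝ) < b / 2 := by linarith
    have habs : |a ^ s - b ^ s| ≤ 2 * (min a b) ^ (s-1) * d := by
      rcases le_total a b with h | h
      · have hd : d = b - a := by rw [hddef, abs_sub_comm, abs_of_nonneg (by linarith)]
        have h' : a ^ s ≤ b ^ s := Real.rpow_le_rpow ha0.le h hs0.le
        rw [abs_of_nonpos (by linarith), min_eq_left h, hd]
        have := rpow_sub_rpow_le s hs0 hs1 ha0 h
        linarith
      · have hd : d = a - b := by rw [hddef, abs_of_nonneg (by linarith)]
        have h' : b ^ s ≤ a ^ s := Real.rpow_le_rpow hb0.le h hs0.le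
        rw [abs_of_nonneg (by linarith), min_eq_right h, hd]
        have := rpow_sub_rpow_le s hs0 hs1 hb0 h
        linarith
    have hKs : (min a b) ^ (s-1) ≤ 2 * b ^ (s-1) := by
      calc (min a b) ^ (s-1) ≤ (b/2) ^ (s-1) :=
            Real.rpow_le_rpow_of_nonpos hK0 hKmin (by linarith)
        _ = b ^ (s-1) * ((2:ℝ)⁻¹) ^ (s-1) := by
            rw [div_eq_mul_inv, Real.mul_rpow hb0.le (by norm_num)]
        _ = b ^ (s-1) * (2:ℝ) ^ (1-s) := by
            rw [Real.inv_rpow (by norm_num : (0:ℝ) ≤ 2), ← Real.rpow_neg (by norm_num : (0:ℝ) ≤ 2), neg_sub]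
        _ ≤ b ^ (s-1) * 2 := by
            apply mul_le_mul_of_nonneg_left _ hbs1pos.le
            calc (2:ℝ) ^ (1-s) ≤ 2 ^ (1:ℝ) :=
                  Real.rpow_le_rpow_of_exponent_le one_le_two (by linarith)
              _ = 2 := Real.rpow_one 2
        _ = 2 * b ^ (s-1) := by ring
    have habs4 : |a ^ s - b ^ s| ≤ 4 * b ^ (s-1) * d := by
      nlinarith [habs, hKs, hd0]
    have key1 : d * Real.exp (lam * M ^ s) ≤ C₁ * E := by
      calc d * Real.exp (lam * M ^ s)
          ≤ (C₁ * Real.exp (c * lam * d ^ s)) * Real.exp (lam * M ^ s) :=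
            mul_le_mul_of_nonneg_right (hC₁ d hd0) (Real.exp_pos _).le
        _ = C₁ * (Real.exp (lam * M ^ s) * Real.exp (c * lam * (min b d) ^ s)) := by
            rw [hmin]; ring
        _ ≤ C₁ * E := mul_le_mul_of_nonneg_left hexpM hC₁pos.le
    calc |Real.exp (lam * a ^ s) - Real.exp (lam * b ^ s)|
        ≤ |lam * a ^ s - lam * b ^ s| * Real.exp (max (lam * a ^ s) (lam * b ^ s)) :=
          exp_sub_exp_le _ _
      _ ≤ (lam * |a ^ s - b ^ s|) * Real.exp (lam * M ^ s) := by
          rw [← mul_sub, abs_mul, abs_of_pos hlam]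
          apply mul_le_mul_of_nonneg_left _ (by positivity)
          apply Real.exp_le_exp.2
          apply max_le
          · exact mul_le_mul_of_nonneg_left
              (Real.rpow_le_rpow ha0.le (le_max_left a b) hs0.le) hlam.le
          · exact mul_le_mul_of_nonneg_left
              (Real.rpow_le_rpow hb0.le (le_max_right a b) hs0.le) hlam.le
      _ ≤ (lam * (4 * b ^ (s-1) * d)) * Real.exp (lam * M ^ s) := by
          apply mul_le_mul_of_nonneg_right _ (Real.exp_pos _).le
          exact mul_le_mul_of_nonneg_left habs4 hlam.le
      _ = (4 * lam * b ^ (s-1)) * (d * Real.exp (lam * M ^ s)) := by ring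
      _ ≤ (4 * lam * b ^ (s-1)) * (C₁ * E) :=
          mul_le_mul_of_nonneg_left key1 (by positivity)
      _ = (4 * lam * C₁) * b ^ (s-1) * E := by ring
      _ ≤ (4*lam*C₁ + C₂) * b ^ (s-1) * E :=
          mul_le_mul_of_nonneg_right (mul_le_mul_of_nonneg_right (by linarith) hbs1pos.le) hE.le
  · -- case 2 : b ≤ 2d
    have hmin2 : b / 2 ≤ min b d := le_min (by linarith) (by linarith)
    have lhs_le : |Real.exp (lam * a ^ s) - Real.exp (lam * b ^ s)| ≤ Real.exp (lam * M ^ s) := by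
      rw [abs_sub_le_iff]
      constructor
      · nlinarith [Real.exp_pos (lam * b ^ s), hexpa]
      · nlinarith [Real.exp_pos (lam * a ^ s), hexpb]
    have hbexp : b ≤ C₂ * Real.exp (c * lam * (min b d) ^ s) := by
      have h1 := hC₂ b hb0.le
      have h2 : c * lam / 2 ^ s * b ^ s = c * lam * (b / 2) ^ s := by
        rw [Real.div_rpow hb0.le (by norm_num : (0:ℝ) ≤ 2)]
        field_simp
      rw [h2] at h1
      refine h1.trans (mul_le_mul_of_nonneg_left (Real.exp_le_exp.2 ?_) hC₂pos.le)
      apply mul_le_mul_of_nonneg_left _ (by positivity)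
      exact Real.rpow_le_rpow (by linarith) hmin2 hs0.le
    have hb1s : (1:ℝ) ≤ b ^ (s-1) * b := by
      have e : b ^ (s-1) * b = b ^ s := by
        rw [← Real.rpow_add_one hb0.ne']
        norm_num
      rw [e]
      exact Real.one_le_rpow hb1 hs0.le
    calc |Real.exp (lam * a ^ s) - Real.exp (lam * b ^ s)|
        ≤ Real.exp (lam * M ^ s) := lhs_le
      _ ≤ (b ^ (s-1) * b) * Real.exp (lam * M ^ s) :=
          le_mul_of_one_le_left (Real.exp_pos _).le hb1s
      _ ≤ (b ^ (s-1) * (C₂ * Real.exp (c * lam * (min b d) ^ s))) * Real.exp (lam * M ^ s) := by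
          apply mul_le_mul_of_nonneg_right _ (Real.exp_pos _).le
          exact mul_le_mul_of_nonneg_left hbexp hbs1pos.le
      _ = (C₂ * b ^ (s-1)) * (Real.exp (lam * M ^ s) * Real.exp (c * lam * (min b d) ^ s)) := by
          ring
      _ ≤ (C₂ * b ^ (s-1)) * E := mul_le_mul_of_nonneg_left hexpM (by positivity)
      _ = C₂ * b ^ (s-1) * E := by ring
      _ ≤ (4*lam*C₁ + C₂) * b ^ (s-1) * E := by
          apply mul_le_mul_of_nonneg_right (mul_le_mul_of_nonneg_right ?_ hbs1pos.le) hE.le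
          nlinarith
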